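/- For every n ≥ 1, the polynomials xy and x^n + y^n are algebraically independent over ℂ; consequently the invariant ring ℂ[x,y]^{D_{2n}} = ℂ[xy, x^n + y^n] is isomorphic as a ℂ-algebra to a polynomial ring in two variables (so the quotient variety ℂ²/D_{2n} is nonsingular). -/

import Mathlib

open MvPolynomial

/-- The algebra automorphism `σ : x ↦ εx, y ↦ ε⁻¹y` of `ℂ[x,y]`. -/
noncomputable def sigmaA (ε : ℂ) : MvPolynomial (Fin 2) ℂ →ₐ[ℂ] MvPolynomial (Fin 2) ℂ :=
  aeval ![C ε * X 0, C ε⁻¹ * X 1]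

/-- The algebra automorphism `τ : x ↦ y, y ↦ x` of `ℂ[x,y]`. -/
noncomputable def tauA : MvPolynomial (Fin 2) ℂ →ₐ[ℂ] MvPolynomial (Fin 2) ℂ :=
  aeval ![X 1, X 0]

/-- Swap of exponents of a monomial in two variables. -/
noncomputable def sw (d : Fin 2 →₀ ℕ) : Fin 2 →₀ ℕ :=
  Finsupp.single 0 (d 1) + Finsupp.single 1 (d 0)

@[simp] lemma sw_apply0 (d : Fin 2 →₀ ℕ) : sw d 0 = d 1 := by
  simp [sw, Finsupp.single_apply]

@[simp] lemma sw_apply1 (d : Fin 2 →₀ ℕ) : sw d 1 = d 0 := by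
  simp [sw, Finsupp.single_apply]

lemma sw_sw (d : Fin 2 →₀ ℕ) : sw (sw d) = d := by
  ext i
  fin_cases i <;> simp

lemma sw_inj {d e : Fin 2 →₀ ℕ} (h : sw d = sw e) : d = e := by
  rw [← sw_sw d, h, sw_sw]

lemma sigmaA_monomial (ε : ℂ) (d : Fin 2 →₀ ℕ) (a : ℂ) :
    sigmaA ε (monomial d a) = monomial d (ε ^ d 0 * ε⁻¹ ^ d 1 * a) := by
  rw [sigmaA, aeval_monomial, monomial_eq, Finsupp.prod_pow, Finsupp.prod_pow,
    Fin.prod_univ_two, Fin.prod_univ_two]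
  simp only [Matrix.cons_val_zero, Matrix.cons_val_one, Matrix.head_cons, map_mul, map_pow,
    algebraMap_eq]
  ring

lemma tauA_monomial (d : Fin 2 →₀ ℕ) (a : ℂ) :
    tauA (monomial d a) = monomial (sw d) a := by
  rw [tauA, aeval_monomial, monomial_eq, Finsupp.prod_pow, Finsupp.prod_pow,
    Fin.prod_univ_two, Fin.prod_univ_two]
  simp only [Matrix.cons_val_zero, Matrix.cons_val_one, Matrix.head_cons, sw_apply0, sw_apply1,
    algebraMap_eq]
  ring

lemma coeff_sigmaA (ε : ℂ) (f : MvPolynomial (Fin 2) ℂ) (d : Fin 2 →₀ ℕ) :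
    coeff d (sigmaA ε f) = ε ^ d 0 * ε⁻¹ ^ d 1 * coeff d f := by
  induction f using MvPolynomial.induction_on' with
  | monomial d' a =>
    rw [sigmaA_monomial]
    simp only [coeff_monomial]
    split_ifs with h
    · subst h; ring
    · simp
  | add f g hf hg => simp [map_add, hf, hg, mul_add]

lemma coeff_tauA (f : MvPolynomial (Fin 2) ℂ) (d : Fin 2 →₀ ℕ) :
    coeff d (tauA f) = coeff (sw d) f := by
  induction f using MvPolynomial.induction_on' with
  | monomial d' a =>
    rw [tauA_monomial]
    simp only [coeff_monomial]
    have : sw d' = d ↔ d' = sw d :=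
      ⟨fun h => by rw [← h, sw_sw], fun h => by rw [h, sw_sw]⟩
    split_ifs with h1 h2 h2 <;> first | rfl | (exfalso; rw [this] at h1; exact absurd h1 h2) |
      (exfalso; rw [← this] at h2; exact absurd h2 h1)
  | add f g hf hg => simp [map_add, hf, hg]

lemma pow_sum_mem (n : ℕ) (k : ℕ) :
    (X 0 : MvPolynomial (Fin 2) ℂ) ^ (n * k) + X 1 ^ (n * k) ∈
      Algebra.adjoin ℂ {(X 0 * X 1 : MvPolynomial (Fin 2) ℂ), X 0 ^ n + X 1 ^ n} := by
  induction k using Nat.twoStepInduction with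
  | zero => simpa using add_mem (one_mem _) (one_mem _)
  | one =>
    rw [mul_one]
    exact Algebra.subset_adjoin (by simp)
  | more k ih ih1 =>
    have key : (X 0 : MvPolynomial (Fin 2) ℂ) ^ (n * (k + 2)) + X 1 ^ (n * (k + 2)) =
        (X 0 ^ n + X 1 ^ n) * (X 0 ^ (n * (k + 1)) + X 1 ^ (n * (k + 1)))
          - (X 0 * X 1) ^ n * (X 0 ^ (n * k) + X 1 ^ (n * k)) := by
      simp only [pow_mul, mul_pow]
      ring
    rw [key]
    exact sub_mem (mul_mem (Algebra.subset_adjoin (by simp)) ih1)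
      (mul_mem (pow_mem (Algebra.subset_adjoin (by simp)) n) ih)

lemma p_pow (j : ℕ) : (X 0 * X 1 : MvPolynomial (Fin 2) ℂ) ^ j =
    monomial (Finsupp.single 0 j + Finsupp.single 1 j) 1 := by
  rw [mul_pow, X_pow_eq_monomial, X_pow_eq_monomial, monomial_mul, one_mul]

lemma diag_mul_pow (j m : ℕ) :
    (X 0 * X 1 : MvPolynomial (Fin 2) ℂ) ^ j * (X 0 ^ m + X 1 ^ m) =
      monomial (Finsupp.single 0 (j + m) + Finsupp.single 1 j) 1 +
      monomial (Finsupp.single 0 j + Finsupp.single 1 (j + m)) 1 := by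
  have e1 : (Finsupp.single (0 : Fin 2) j + Finsupp.single 1 j) + Finsupp.single 0 m =
      Finsupp.single 0 (j + m) + Finsupp.single 1 j := by
    ext i; fin_cases i <;> simp [Finsupp.single_apply]
  have e2 : (Finsupp.single (0 : Fin 2) j + Finsupp.single 1 j) + Finsupp.single 1 m =
      Finsupp.single 0 j + Finsupp.single 1 (j + m) := by
    ext i; fin_cases i <;> simp [Finsupp.single_apply]
  rw [p_pow, X_pow_eq_monomial, X_pow_eq_monomial, mul_add, monomial_mul, monomial_mul,
    one_mul, e1, e2]

lemma invariant_mem (n : ℕ) (hn : 1 ≤ n) (ε : ℂ) (hε : IsPrimitiveRoot ε n) :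
    ∀ (N : ℕ) (f : MvPolynomial (Fin 2) ℂ), f.support.card ≤ N →
    (∀ d ∈ f.support, ε ^ (d 0) = ε ^ (d 1)) →
    (∀ d, coeff (sw d) f = coeff d f) →
    f ∈ Algebra.adjoin ℂ {(X 0 * X 1 : MvPolynomial (Fin 2) ℂ), X 0 ^ n + X 1 ^ n} := by
  intro N
  induction N with
  | zero =>
    intro f hcard _ _
    have : f = 0 := by
      rw [← support_eq_empty]
      exact Finset.card_eq_zero.mp (le_antisymm hcard (Nat.zero_le _))
    rw [this]; exact zero_mem _
  | succ N IH =>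
    intro f hcard H1 H2
    by_cases hf0 : f = 0
    · rw [hf0]; exact zero_mem _
    obtain ⟨d, hd, hle⟩ : ∃ d ∈ f.support, d 1 ≤ d 0 := by
      obtain ⟨e, he⟩ := Finset.nonempty_iff_ne_empty.mpr
        (fun h => hf0 (support_eq_empty.mp h))
      rcases le_total (e 1) (e 0) with h | h
      · exact ⟨e, he, h⟩
      · refine ⟨sw e, ?_, by simpa using h⟩
        rw [mem_support_iff, H2 e]
        exact mem_support_iff.mp he
    set c := coeff d f with hc
    have hc0 : c ≠ 0 := mem_support_iff.mp hd
    have hεne : ε ≠ 0 := hε.ne_zero (by omega)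
    have hCc : (C c : MvPolynomial (Fin 2) ℂ) ∈
        Algebra.adjoin ℂ {(X 0 * X 1 : MvPolynomial (Fin 2) ℂ), X 0 ^ n + X 1 ^ n} := by
      rw [← algebraMap_eq]
      exact Subalgebra.algebraMap_mem _ c
    obtain ⟨k, hk⟩ : ∃ k, d 0 - d 1 = n * k := by
      have h1 : ε ^ (d 0) = ε ^ (d 1) := H1 d hd
      have h3 : d 0 = (d 0 - d 1) + d 1 := (Nat.sub_add_cancel hle).symm
      rw [h3, pow_add] at h1
      have h4 : ε ^ (d 0 - d 1) = 1 :=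
        mul_right_cancel₀ (pow_ne_zero _ hεne) (by rw [h1, one_mul])
      exact (hε.pow_eq_one_iff_dvd _).mp h4
    by_cases hdd : d 0 = d 1
    -- Case A: diagonal monomial
    · have hswd : sw d = d := by
        ext i; fin_cases i <;> simp [hdd]
      have hmono : (X 0 * X 1 : MvPolynomial (Fin 2) ℂ) ^ (d 1) = monomial d 1 := by
        have hde : Finsupp.single (0 : Fin 2) (d 1) + Finsupp.single 1 (d 1) = d := by
          ext i; fin_cases i <;> simp [Finsupp.single_apply, hdd]
        rw [p_pow, hde]
      set g := f - C c * ((X 0 * X 1 : MvPolynomial (Fin 2) ℂ) ^ (d 1)) with hg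
      have hgco : ∀ e', coeff e' g = coeff e' f - (if d = e' then c else 0) := by
        intro e'
        rw [hg, coeff_sub, hmono, C_mul_monomial, mul_one, coeff_monomial]
      have hsub : g.support ⊆ f.support.erase d := by
        intro e' he'
        rw [Finset.mem_erase, mem_support_iff]
        by_cases h : d = e'
        · exfalso
          apply mem_support_iff.mp he'
          rw [hgco, if_pos h, ← h, ← hc, sub_self]
        · exact ⟨fun hh => h hh.symm, by
            have := mem_support_iff.mp he'
            rwa [hgco, if_neg h, sub_zero] at this⟩
      have hcard' : g.support.card ≤ N := by
        have h1 := Finset.card_le_card hsub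
        rw [Finset.card_erase_of_mem hd] at h1
        omega
      have H1' : ∀ e ∈ g.support, ε ^ (e 0) = ε ^ (e 1) :=
        fun e he => H1 e (Finset.mem_of_mem_erase (hsub he))
      have H2' : ∀ e, coeff (sw e) g = coeff e g := by
        intro e
        rw [hgco, hgco, H2 e]
        have heq : (d = sw e) ↔ (d = e) := by
          constructor
          · intro h
            have := congrArg sw h
            rwa [hswd, sw_sw] at this
          · intro h
            subst h
            exact hswd.symm
        rw [if_congr heq rfl rfl]
      have hgmem := IH g hcard' H1' H2'
      have hfeq : f = g + C c * ((X 0 * X 1 : MvPolynomial (Fin 2) ℂ) ^ (d 1)) := by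
        rw [hg]; ring
      rw [hfeq]
      exact add_mem hgmem (mul_mem hCc (pow_mem (Algebra.subset_adjoin (by simp)) _))
    -- Case B: off-diagonal pair
    · have hlt : d 1 < d 0 := lt_of_le_of_ne hle (fun h => hdd h.symm)
      have hdsum : d 1 + n * k = d 0 := by omega
      have hdnsw : d ≠ sw d := by
        intro h
        have := congrArg (fun e : Fin 2 →₀ ℕ => e 0) h
        simp at this
        omega
      have hswdne : sw d ≠ d := fun h => hdnsw h.symm
      have hd_eq : Finsupp.single (0 : Fin 2) (d 1 + n * k) + Finsupp.single 1 (d 1) = d := by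
        ext i; fin_cases i <;> simp [Finsupp.single_apply, hdsum]
      have hswd_eq : Finsupp.single (0 : Fin 2) (d 1) + Finsupp.single 1 (d 1 + n * k) = sw d := by
        ext i; fin_cases i <;> simp [Finsupp.single_apply, hdsum]
      have hmono : (X 0 * X 1 : MvPolynomial (Fin 2) ℂ) ^ (d 1) *
          (X 0 ^ (n * k) + X 1 ^ (n * k)) = monomial d 1 + monomial (sw d) 1 := by
        rw [diag_mul_pow, hd_eq, hswd_eq]
      set g := f - C c * ((X 0 * X 1 : MvPolynomial (Fin 2) ℂ) ^ (d 1) *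
          (X 0 ^ (n * k) + X 1 ^ (n * k))) with hg
      have hgco : ∀ e', coeff e' g =
          coeff e' f - ((if d = e' then c else 0) + (if sw d = e' then c else 0)) := by
        intro e'
        rw [hg, coeff_sub, hmono, mul_add, C_mul_monomial, C_mul_monomial, mul_one,
          coeff_add, coeff_monomial, coeff_monomial]
      have hswc : coeff (sw d) f = c := by rw [H2 d, ← hc]
      have hsub : g.support ⊆ f.support.erase d := by
        intro e' he'
        rw [Finset.mem_erase, mem_support_iff]
        by_cases h : d = e'
        · exfalso
          apply mem_support_iff.mp he'
          rw [hgco, if_pos h, if_neg (h ▸ hswdne), ← h, ← hc, add_zero, sub_self]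
        · by_cases h2 : sw d = e'
          · exfalso
            apply mem_support_iff.mp he'
            rw [hgco, if_pos h2, if_neg h, ← h2, hswc, zero_add, sub_self]
          · exact ⟨fun hh => h hh.symm, by
              have := mem_support_iff.mp he'
              rwa [hgco, if_neg h, if_neg h2, add_zero, sub_zero] at this⟩
      have hcard' : g.support.card ≤ N := by
        have h1 := Finset.card_le_card hsub
        rw [Finset.card_erase_of_mem hd] at h1
        omega
      have H1' : ∀ e ∈ g.support, ε ^ (e 0) = ε ^ (e 1) :=
        fun e he => H1 e (Finset.mem_of_mem_erase (hsub he))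
      have H2' : ∀ e, coeff (sw e) g = coeff e g := by
        intro e
        rw [hgco, hgco, H2 e]
        have heq1 : (d = sw e) ↔ (sw d = e) := by
          constructor
          · intro h; rw [h, sw_sw]
          · intro h; rw [← h, sw_sw]
        have heq2 : (sw d = sw e) ↔ (d = e) := by
          constructor
          · exact sw_inj
          · intro h; rw [h]
        rw [if_congr heq1 rfl rfl, if_congr heq2 rfl rfl, add_comm (if sw d = e then c else 0)]
      have hgmem := IH g hcard' H1' H2'
      have hfeq : f = g + C c * ((X 0 * X 1 : MvPolynomial (Fin 2) ℂ) ^ (d 1) *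
          (X 0 ^ (n * k) + X 1 ^ (n * k))) := by
        rw [hg]; ring
      rw [hfeq]
      exact add_mem hgmem (mul_mem hCc
        (mul_mem (pow_mem (Algebra.subset_adjoin (by simp)) _) (pow_sum_mem n k)))

lemma alg_indep (n : ℕ) (hn : 1 ≤ n) :
    AlgebraicIndependent ℂ
      ![(X 0 * X 1 : MvPolynomial (Fin 2) ℂ), X 0 ^ n + X 1 ^ n] := by
  have evaeq : ∀ (x : Fin 2 → ℂ) (p : MvPolynomial (Fin 2) ℂ), aeval x p = eval x p :=
    fun x p => by rw [aeval_def, Algebra.algebraMap_self]; rfl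
  rw [algebraicIndependent_iff]
  intro F hF
  apply MvPolynomial.funext (R := ℂ)
  intro v
  simp only [map_zero]
  obtain ⟨s, t, hst, hsum⟩ : ∃ s t : ℂ, s * t = v 0 ∧ s ^ n + t ^ n = v 1 := by
    by_cases hP : v 0 = 0
    · obtain ⟨s, hs⟩ := IsAlgClosed.exists_pow_nat_eq (v 1) hn
      exact ⟨s, 0, by simp [hP], by simp [hs, zero_pow (by omega : n ≠ 0)]⟩
    · obtain ⟨w, hw⟩ := IsAlgClosed.exists_pow_nat_eq (k := ℂ) ((v 1) ^ 2 - 4 * (v 0) ^ n) two_pos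
      set z := (v 1 + w) / 2 with hzdef
      have hz : v 0 ^ n = z * (v 1 - z) := by
        rw [hzdef]; linear_combination (1/4 : ℂ) * hw
      have hz0 : z ≠ 0 := by
        intro h; rw [h, zero_mul] at hz
        exact hP (pow_eq_zero_iff (by omega : n ≠ 0) |>.mp hz)
      obtain ⟨s, hs⟩ := IsAlgClosed.exists_pow_nat_eq z hn
      have hs0 : s ≠ 0 := fun h => hz0 (by rw [← hs, h, zero_pow (by omega : n ≠ 0)])
      refine ⟨s, v 0 / s, by field_simp, ?_⟩
      rw [div_pow, hs, hz]
      field_simp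
      ring
  have hv : (fun i => aeval ![s, t] (![(X 0 * X 1 : MvPolynomial (Fin 2) ℂ),
      X 0 ^ n + X 1 ^ n] i)) = v := by
    funext i
    fin_cases i <;> simp [evaeq, hst, hsum]
  have key : eval ![s, t] (aeval ![(X 0 * X 1 : MvPolynomial (Fin 2) ℂ), X 0 ^ n + X 1 ^ n] F)
      = eval v F := by
    rw [← evaeq, ← evaeq, aeval_eq_bind₁, aeval_bind₁, hv]
  rw [hF, map_zero] at key
  exact key.symm

/-- `xy` and `xⁿ + yⁿ` are algebraically independent over `ℂ`, and the
invariant ring `ℂ[x,y]^{D_{2n}} = ℂ[xy, xⁿ + yⁿ]` is isomorphic as a `ℂ`-algebra to a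
polynomial ring in two variables. -/
theorem dihedral_invariant_ring_polynomial (n : ℕ) (hn : 1 ≤ n) (ε : ℂ)
    (hε : IsPrimitiveRoot ε n) :
    AlgebraicIndependent ℂ
      ![(X 0 * X 1 : MvPolynomial (Fin 2) ℂ), X 0 ^ n + X 1 ^ n] ∧
    AlgHom.equalizer (sigmaA ε) (AlgHom.id ℂ (MvPolynomial (Fin 2) ℂ)) ⊓
        AlgHom.equalizer tauA (AlgHom.id ℂ (MvPolynomial (Fin 2) ℂ)) =
      Algebra.adjoin ℂ {(X 0 * X 1 : MvPolynomial (Fin 2) ℂ), X 0 ^ n + X 1 ^ n} ∧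
    Nonempty
      ((Algebra.adjoin ℂ {(X 0 * X 1 : MvPolynomial (Fin 2) ℂ), X 0 ^ n + X 1 ^ n}) ≃ₐ[ℂ]
        MvPolynomial (Fin 2) ℂ) := by
  have hεne : ε ≠ 0 := hε.ne_zero (by omega)
  have hai := alg_indep n hn
  refine ⟨hai, ?_, ?_⟩
  · apply le_antisymm
    · intro f hf
      rw [Algebra.mem_inf, AlgHom.mem_equalizer, AlgHom.mem_equalizer] at hf
      obtain ⟨h1, h2⟩ := hf
      simp only [AlgHom.id_apply] at h1 h2
      apply invariant_mem n hn ε hε f.support.card f le_rfl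
      · intro d hd
        have hcd := congrArg (coeff d) h1
        rw [coeff_sigmaA] at hcd
        have hc0 : coeff d f ≠ 0 := mem_support_iff.mp hd
        have h4 : ε ^ d 0 * ε⁻¹ ^ d 1 = 1 :=
          mul_right_cancel₀ hc0 (by rw [hcd, one_mul])
        rw [inv_pow] at h4
        exact (mul_inv_eq_one₀ (pow_ne_zero _ hεne)).mp h4
      · intro d
        have hcd := congrArg (coeff d) h2
        rw [coeff_tauA] at hcd
        exact hcd
    · apply Algebra.adjoin_le
      rintro z hz
      simp only [Set.mem_insert_iff, Set.mem_singleton_iff] at hz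
      rw [SetLike.mem_coe, Algebra.mem_inf, AlgHom.mem_equalizer, AlgHom.mem_equalizer]
      rcases hz with rfl | rfl
      · constructor
        · show sigmaA ε (X 0 * X 1) = _
          rw [sigmaA]
          simp only [map_mul, aeval_X, Matrix.cons_val_zero, Matrix.cons_val_one,
            Matrix.head_cons, AlgHom.id_apply]
          rw [mul_mul_mul_comm, ← C_mul, mul_inv_cancel₀ hεne, C_1, one_mul]
        · show tauA (X 0 * X 1) = _
          rw [tauA]
          simp only [map_mul, aeval_X, Matrix.cons_val_zero, Matrix.cons_val_one,
            Matrix.head_cons, AlgHom.id_apply]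
          ring
      · constructor
        · show sigmaA ε (X 0 ^ n + X 1 ^ n) = _
          rw [sigmaA]
          simp only [map_add, map_pow, aeval_X, Matrix.cons_val_zero, Matrix.cons_val_one,
            Matrix.head_cons, AlgHom.id_apply]
          rw [mul_pow, mul_pow, ← C_pow, ← C_pow, hε.pow_eq_one, inv_pow, hε.pow_eq_one,
            inv_one, C_1, one_mul, one_mul]
        · show tauA (X 0 ^ n + X 1 ^ n) = _
          rw [tauA]
          simp only [map_add, map_pow, aeval_X, Matrix.cons_val_zero, Matrix.cons_val_one,
            Matrix.head_cons, AlgHom.id_apply]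
          ring
  · have hr : Set.range ![(X 0 * X 1 : MvPolynomial (Fin 2) ℂ), X 0 ^ n + X 1 ^ n] =
        ({(X 0 * X 1 : MvPolynomial (Fin 2) ℂ), X 0 ^ n + X 1 ^ n} : Set _) := by
      ext z
      constructor
      · rintro ⟨i, rfl⟩
        fin_cases i
        · left; rfl
        · right; rfl
      · rintro (rfl | rfl)
        · exact ⟨0, rfl⟩
        · exact ⟨1, rfl⟩
    have e := hai.aevalEquiv
    rw [hr] at e
    exact ⟨e.symm⟩
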